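/- arXiv:2604.18044 — 3 statements merged into one kernel-verified Lean document; each statement's English description precedes it below -/
import Mathlib

section
/- The benchmark public-disclosure coefficient on the previous group's average signal, c(K, ν_s, ν_ε) = (Kν_s/(ν_ε+(K+1)ν_s))·(1 + ν_s/(ν_ε+(K+1)ν_s)), is strictly increasing in the group size K, strictly increasing in ν_s, and strictly decreasing in ν_ε. -/
/-- The benchmark public-disclosure coefficient
`c(K,νs,νε) = (Kνs/(νε+(K+1)νs))·(1+νs/(νε+(K+1)νs))` on the previous group's average
signal is strictly increasing in `K`, strictly increasing in `νs`, and strictly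
decreasing in `νε`. -/
theorem benchmark_coefficient_monotone
    (c : ℕ → ℝ → ℝ → ℝ)
    (hc : ∀ (K : ℕ) (νs νε : ℝ),
      c K νs νε = ((K : ℝ) * νs / (νε + ((K : ℝ) + 1) * νs))
        * (1 + νs / (νε + ((K : ℝ) + 1) * νs))) :
    (∀ (K : ℕ) (νs νε : ℝ), 1 ≤ K → 0 < νs → 0 < νε →
        c K νs νε < c (K + 1) νs νε)
      ∧ (∀ (K : ℕ) (νs νs' νε : ℝ), 1 ≤ K → 0 < νs → νs < νs' → 0 < νε →
        c K νs νε < c K νs' νε)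
      ∧ (∀ (K : ℕ) (νs νε νε' : ℝ), 1 ≤ K → 0 < νs → 0 < νε → νε < νε' →
        c K νs νε' < c K νs νε) := by
  have key : ∀ (a s D : ℝ), D ≠ 0 → a / D * (1 + s / D) = a * (D + s) / D ^ 2 := by
    intro a s D hD
    have h : 1 + s / D = (D + s) / D := by rw [add_div, div_self hD]
    rw [h, div_mul_div_comm, pow_two]
  refine ⟨?_, ?_, ?_⟩
  · intro K νs νε hK hs he
    rw [hc, hc]
    push_cast
    have hK1 : (1 : ℝ) ≤ (K : ℝ) := by exact_mod_cast hK
    have hD1 : (0:ℝ) < νε + ((K : ℝ) + 1) * νs := by nlinarith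
    have hD2 : (0:ℝ) < νε + ((K : ℝ) + 1 + 1) * νs := by nlinarith
    rw [key _ _ _ hD1.ne', key _ _ _ hD2.ne',
      div_lt_div_iff₀ (by positivity) (by positivity)]
    have heq : νε + ((K : ℝ) + 1 + 1) * νs = (νε + ((K : ℝ) + 1) * νs) + νs := by
      ring
    rw [heq]
    set D := νε + ((K : ℝ) + 1) * νs with hD
    have hA : ((K : ℝ) + 1) * νs < D := by rw [hD]; nlinarith
    have h1 : (0:ℝ) ≤ (D - ((K:ℝ)+1)*νs) * (D * D) :=
      mul_nonneg (by linarith) (by positivity)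
    have h2 : (0:ℝ) ≤ (D - ((K:ℝ)+1)*νs) * (νs * D) :=
      mul_nonneg (by linarith) (by positivity)
    have h3 : (0:ℝ) ≤ (D - ((K:ℝ)+1)*νs) * (νs * νs) :=
      mul_nonneg (by linarith) (by positivity)
    nlinarith [mul_pos hs (mul_pos hs hs), mul_pos hs (mul_pos hs hD1),
      mul_pos hs (mul_pos hD1 hD1), mul_nonneg hs.le h1, mul_nonneg hs.le h2,
      mul_nonneg hs.le h3, mul_pos (mul_pos hs hs) (mul_pos hs hs)]
  · intro K νs νs' νε hK hs hss' he
    rw [hc, hc]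
    have hK1 : (1 : ℝ) ≤ (K : ℝ) := by exact_mod_cast hK
    have hKpos : (0:ℝ) < (K : ℝ) := by linarith
    have hs' : (0:ℝ) < νs' := lt_trans hs hss'
    have hD1 : (0:ℝ) < νε + ((K : ℝ) + 1) * νs := by nlinarith
    have hD2 : (0:ℝ) < νε + ((K : ℝ) + 1) * νs' := by nlinarith
    rw [key _ _ _ hD1.ne', key _ _ _ hD2.ne',
      div_lt_div_iff₀ (by positivity) (by positivity)]
    have hpos : (0:ℝ) < (νε + ((K : ℝ) + 1) * νs) * (νε + ((K : ℝ) + 1) * νs')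
        + νs' * (νε + ((K : ℝ) + 1) * νs) + νs * (νε + ((K : ℝ) + 1) * νs') := by
      positivity
    nlinarith [mul_pos (mul_pos hKpos (mul_pos he (sub_pos.2 hss'))) hpos]
  · intro K νs νε νε' hK hs he he'
    rw [hc, hc]
    have hK1 : (1 : ℝ) ≤ (K : ℝ) := by exact_mod_cast hK
    have hKpos : (0:ℝ) < (K : ℝ) := by linarith
    have he'' : (0:ℝ) < νε' := lt_trans he he'
    have hD1 : (0:ℝ) < νε + ((K : ℝ) + 1) * νs := by nlinarith
    have hD2 : (0:ℝ) < νε' + ((K : ℝ) + 1) * νs := by nlinarith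
    rw [key _ _ _ hD1.ne', key _ _ _ hD2.ne',
      div_lt_div_iff₀ (by positivity) (by positivity)]
    have hpos : (0:ℝ) < (νε + ((K : ℝ) + 1) * νs) * (νε' + ((K : ℝ) + 1) * νs)
        + νs * ((νε + ((K : ℝ) + 1) * νs) + (νε' + ((K : ℝ) + 1) * νs)) := by
      positivity
    nlinarith [mul_pos (mul_pos (mul_pos hKpos hs) (sub_pos.2 he')) hpos]
end

section
/- The coefficient on the publicly disclosed average elicited perceived norm N̂_K, namely C_N(K,ν_s,ν_ε) = (Kν_s/(ν_ε+(K+1)ν_s))·(1+ν_s/(ν_ε+(K+1)ν_s))·((ν_s+ν_ε)²/ν_s²), is strictly increasing in K, strictly decreasing in ν_s, and strictly increasing in ν_ε. -/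
lemma g_mono_r (k r r' : ℝ) (hk : 1 ≤ k) (hr : 0 < r) (hrr : r < r') :
    k * (r + k + 2) * (1 + r) ^ 2 / (r + k + 1) ^ 2
      < k * (r' + k + 2) * (1 + r') ^ 2 / (r' + k + 1) ^ 2 := by
  have hk0 : (0:ℝ) < k := by linarith
  have hr' : 0 < r' := lt_trans hr hrr
  rw [div_lt_div_iff₀ (by positivity) (by positivity)]
  have key : k * (r' + k + 2) * (1 + r') ^ 2 * (r + k + 1) ^ 2
      - k * (r + k + 2) * (1 + r) ^ 2 * (r' + k + 1) ^ 2
      = k * (r' - r) *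
        (1 + 6*k + 7*k^2 + 2*k^3 + 2*r' + 8*k*r' + 6*k^2*r' + k^3*r'
          + r'^2 + 2*k*r'^2 + k^2*r'^2 + 2*r + 8*k*r + 6*k^2*r + k^3*r
          + 4*r*r' + 10*k*r*r' + 3*k^2*r*r' + 2*r*r'^2 + 2*k*r*r'^2
          + r^2 + 2*k*r^2 + k^2*r^2 + 2*r^2*r' + 2*k*r^2*r' + r^2*r'^2) := by
    ring
  have hpos : 0 < k * (r' - r) *
        (1 + 6*k + 7*k^2 + 2*k^3 + 2*r' + 8*k*r' + 6*k^2*r' + k^3*r'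
          + r'^2 + 2*k*r'^2 + k^2*r'^2 + 2*r + 8*k*r + 6*k^2*r + k^3*r
          + 4*r*r' + 10*k*r*r' + 3*k^2*r*r' + 2*r*r'^2 + 2*k*r*r'^2
          + r^2 + 2*k*r^2 + k^2*r^2 + 2*r^2*r' + 2*k*r^2*r' + r^2*r'^2) := by
    have h1 : 0 < r' - r := sub_pos.2 hrr
    positivity
  linarith

lemma g_mono_k (k r : ℝ) (hk : 1 ≤ k) (hr : 0 < r) :
    k * (r + k + 2) * (1 + r) ^ 2 / (r + k + 1) ^ 2
      < (k + 1) * (r + k + 3) * (1 + r) ^ 2 / (r + k + 2) ^ 2 := by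
  have hk0 : (0:ℝ) < k := by linarith
  rw [div_lt_div_iff₀ (by positivity) (by positivity)]
  nlinarith [sq_nonneg (r + k + 1), mul_pos hr hk0, sq_nonneg (1 + r),
    mul_pos (mul_pos hr hk0) hk0, mul_pos hr hr, sq_nonneg (r + 1),
    mul_pos (mul_pos hr hr) hk0, sq_nonneg ((1+r)*(r+k+1)), sq_nonneg ((1+r)*(k-1))]

lemma CN_eq (k x y : ℝ) (hk : 1 ≤ k) (hx : 0 < x) (hy : 0 < y) :
    k * x * (y + (k + 2) * x) * (x + y) ^ 2 / ((y + (k + 1) * x) ^ 2 * x ^ 2)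
      = k * (y/x + k + 2) * (1 + y/x) ^ 2 / (y/x + k + 1) ^ 2 := by
  have hx' : x ≠ 0 := ne_of_gt hx
  have h1 : y + (k + 1) * x ≠ 0 := by nlinarith
  have h2 : y/x + k + 1 ≠ 0 := by positivity
  field_simp
  ring

/-- The coefficient on the publicly disclosed average elicited perceived norm `N̂_K`,
`C_N(K,νs,νε) = Kνs(νε+(K+2)νs)(νs+νε)² / ((νε+(K+1)νs)²νs²)`, is strictly increasing in
`K`, strictly decreasing in `νs`, and strictly increasing in `νε`. -/
theorem CN_coefficient_monotone
    (CN : ℕ → ℝ → ℝ → ℝ)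
    (hCN : ∀ (K : ℕ) (νs νε : ℝ),
      CN K νs νε = (K : ℝ) * νs * (νε + ((K : ℝ) + 2) * νs) * (νs + νε) ^ 2
        / ((νε + ((K : ℝ) + 1) * νs) ^ 2 * νs ^ 2)) :
    (∀ (K : ℕ) (νs νε : ℝ), 1 ≤ K → 0 < νs → 0 < νε →
        CN K νs νε < CN (K + 1) νs νε)
      ∧ (∀ (K : ℕ) (νs νs' νε : ℝ), 1 ≤ K → 0 < νs → νs < νs' → 0 < νε →
        CN K νs' νε < CN K νs νε)
      ∧ (∀ (K : ℕ) (νs νε νε' : ℝ), 1 ≤ K → 0 < νs → 0 < νε → νε < νε' →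
        CN K νs νε < CN K νs νε') := by
  refine ⟨?_, ?_, ?_⟩
  · intro K x y hK hx hy
    have hk : (1:ℝ) ≤ (K:ℝ) := by exact_mod_cast hK
    have hr : 0 < y / x := by positivity
    rw [hCN, hCN, CN_eq (K:ℝ) x y hk hx hy,
      CN_eq ((K:ℕ)+1 : ℕ) x y (by push_cast; linarith) hx hy]
    push_cast
    have := g_mono_k (K:ℝ) (y/x) hk hr
    calc (K:ℝ) * (y/x + (K:ℝ) + 2) * (1 + y/x) ^ 2 / (y/x + (K:ℝ) + 1) ^ 2
        < ((K:ℝ) + 1) * (y/x + (K:ℝ) + 3) * (1 + y/x) ^ 2 / (y/x + (K:ℝ) + 2) ^ 2 := this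
      _ = ((K:ℝ) + 1) * (y/x + ((K:ℝ) + 1) + 2) * (1 + y/x) ^ 2 / (y/x + ((K:ℝ) + 1) + 1) ^ 2 := by
          ring_nf
  · intro K x x' y hK hx hxx hy
    have hk : (1:ℝ) ≤ (K:ℝ) := by exact_mod_cast hK
    have hx' : 0 < x' := lt_trans hx hxx
    rw [hCN, hCN, CN_eq (K:ℝ) x y hk hx hy, CN_eq (K:ℝ) x' y hk hx' hy]
    exact g_mono_r (K:ℝ) (y/x') (y/x) hk (by positivity)
      (by exact div_lt_div_of_pos_left hy hx hxx)
  · intro K x y y' hK hx hy hyy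
    have hk : (1:ℝ) ≤ (K:ℝ) := by exact_mod_cast hK
    rw [hCN, hCN, CN_eq (K:ℝ) x y hk hx hy,
      CN_eq (K:ℝ) x y' hk hx (lt_trans hy hyy)]
    exact g_mono_r (K:ℝ) (y/x) (y'/x) hk (by positivity)
      (by exact div_lt_div_of_pos_right hyy hx)
end

section
/- The coefficient on the publicly disclosed average personal value r̄_K, namely C_r(K,ν_s,ν_ε) = K(ν_s+ν_ε)(ν_ε+(K+2)ν_s)/(ν_ε+(K+1)ν_s)², is strictly increasing in K, strictly decreasing in ν_s, and strictly increasing in ν_ε. -/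
/-- The coefficient on the publicly disclosed average personal value `r̄_K`,
`C_r(K,νs,νε) = K(νs+νε)(νε+(K+2)νs)/(νε+(K+1)νs)²`, is strictly increasing in `K`,
strictly decreasing in `νs`, and strictly increasing in `νε`. -/
theorem Cr_coefficient_monotone
    (Cr : ℕ → ℝ → ℝ → ℝ)
    (hCr : ∀ (K : ℕ) (νs νε : ℝ),
      Cr K νs νε = (K : ℝ) * (νs + νε) * (νε + ((K : ℝ) + 2) * νs)
        / (νε + ((K : ℝ) + 1) * νs) ^ 2) :
    (∀ (K : ℕ) (νs νε : ℝ), 1 ≤ K → 0 < νs → 0 < νε →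
        Cr K νs νε < Cr (K + 1) νs νε)
      ∧ (∀ (K : ℕ) (νs νs' νε : ℝ), 1 ≤ K → 0 < νs → νs < νs' → 0 < νε →
        Cr K νs' νε < Cr K νs νε)
      ∧ (∀ (K : ℕ) (νs νε νε' : ℝ), 1 ≤ K → 0 < νs → 0 < νε → νε < νε' →
        Cr K νs νε < Cr K νs νε') := by
  refine ⟨?_, ?_, ?_⟩
  · intro K a e hK ha he
    have hk : (1:ℝ) ≤ (K:ℝ) := by exact_mod_cast hK
    rw [hCr, hCr]
    push_cast
    rw [div_lt_div_iff₀ (by positivity) (by positivity)]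
    have key : 0 < (a + e) * ((e + ((K:ℝ)+1)*a) * e^2
        + ((K:ℝ)+4) * a * (e + ((K:ℝ)+1)*a) * e + 3*a^2*e + (2*(K:ℝ)+3)*a^3) := by
      positivity
    nlinarith [key]
  · intro K a b e hK ha hab he
    have hk : (1:ℝ) ≤ (K:ℝ) := by exact_mod_cast hK
    have hb : 0 < b := ha.trans hab
    rw [hCr, hCr]
    rw [div_lt_div_iff₀ (by positivity) (by positivity)]
    have h1 : (0:ℝ) < (K:ℝ)^2 + 2*(K:ℝ) - 1 := by nlinarith
    have h2 : (0:ℝ) < (K:ℝ)^2 + (K:ℝ) - 1 := by nlinarith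
    have hA : 0 < ((K:ℝ)+1) * ((K:ℝ)^2 + 2*(K:ℝ) - 1) * e * a * b :=
      mul_pos (mul_pos (mul_pos (mul_pos (by linarith) h1) he) ha) hb
    have hB : 0 < ((K:ℝ)^2 + (K:ℝ) - 1) * e^2 * (a + b) :=
      mul_pos (mul_pos h2 (by positivity)) (by linarith)
    have hC : 0 ≤ ((K:ℝ) - 1) * e^3 := mul_nonneg (by linarith) (by positivity)
    have key : 0 < (K:ℝ) * (b - a) * (((K:ℝ)+1) * ((K:ℝ)^2 + 2*(K:ℝ) - 1) * e * a * b
        + ((K:ℝ)^2 + (K:ℝ) - 1) * e^2 * (a + b) + ((K:ℝ) - 1) * e^3) :=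
      mul_pos (mul_pos (by linarith) (by linarith)) (by linarith)
    nlinarith [key]
  · intro K a e f hK ha he hef
    have hk : (1:ℝ) ≤ (K:ℝ) := by exact_mod_cast hK
    have hf : 0 < f := he.trans hef
    rw [hCr, hCr]
    rw [div_lt_div_iff₀ (by positivity) (by positivity)]
    have h1 : (0:ℝ) < (K:ℝ)^2 + 2*(K:ℝ) - 1 := by nlinarith
    have h2 : (0:ℝ) < (K:ℝ)^2 + (K:ℝ) - 1 := by nlinarith
    have hA : 0 ≤ ((K:ℝ) - 1) * a * e * f :=
      mul_nonneg (mul_nonneg (mul_nonneg (by linarith) ha.le) he.le) hf.le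
    have hB : 0 < ((K:ℝ)^2 + (K:ℝ) - 1) * a^2 * (e + f) :=
      mul_pos (mul_pos h2 (by positivity)) (by linarith)
    have hC : 0 < ((K:ℝ)+1) * ((K:ℝ)^2 + 2*(K:ℝ) - 1) * a^3 :=
      mul_pos (mul_pos (by linarith) h1) (by positivity)
    have key : 0 < (K:ℝ) * (f - e) * (((K:ℝ) - 1) * a * e * f
        + ((K:ℝ)^2 + (K:ℝ) - 1) * a^2 * (e + f)
        + ((K:ℝ)+1) * ((K:ℝ)^2 + 2*(K:ℝ) - 1) * a^3) :=
      mul_pos (mul_pos (by linarith) (by linarith)) (by linarith)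
    nlinarith [key]
end
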